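/- Let b > 0, ε real with b + ε > 0, and k real. The propagation matrix P = -A₆⁻¹ A₅ A₄⁻¹ A₃ A₂⁻¹ A₁ (with A₁,…,A₆ as in the tight-binding model) satisfies trace(P) = (2b/(b+ε) + (b+ε)²/b² − e^{ik})² − 2 e^{-ik}. -/

import Mathlib

set_option maxHeartbeats 1000000


open Complex Matrix

theorem trace_propagation_matrix (b ε k : ℝ) (hb : 0 < b) (hbe : 0 < b + ε) :
    let eik : ℂ := Complex.exp (Complex.I * (k : ℂ))
    let emik : ℂ := Complex.exp (-(Complex.I * (k : ℂ)))
    let A1 : Matrix (Fin 2) (Fin 2) ℂ := !![-(b : ℂ), 0; -(b : ℂ), -((b : ℂ) + ε) * emik]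
    let A2 : Matrix (Fin 2) (Fin 2) ℂ := !![-(b : ℂ), -((b : ℂ) + ε) * eik; 0, -(b : ℂ)]
    let A3 : Matrix (Fin 2) (Fin 2) ℂ := !![-((b : ℂ) + ε) * emik, 0; -(b : ℂ), -(b : ℂ)]
    let A4 : Matrix (Fin 2) (Fin 2) ℂ := !![-(b : ℂ), -(b : ℂ); 0, -((b : ℂ) + ε)]
    let A5 : Matrix (Fin 2) (Fin 2) ℂ := !![-(b : ℂ), 0; -((b : ℂ) + ε) * eik, -(b : ℂ)]
    let A6 : Matrix (Fin 2) (Fin 2) ℂ := !![-((b : ℂ) + ε), -(b : ℂ); 0, -(b : ℂ)]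
    let P : Matrix (Fin 2) (Fin 2) ℂ := -(A6⁻¹ * A5 * A4⁻¹ * A3 * A2⁻¹ * A1)
    P.trace = (2 * (b : ℂ) / ((b : ℂ) + ε) + ((b : ℂ) + ε) ^ 2 / (b : ℂ) ^ 2 - eik) ^ 2
      - 2 * emik := by
  intro eik emik A1 A2 A3 A4 A5 A6 P
  have hb0 : (b : ℂ) ≠ 0 := by exact_mod_cast hb.ne'
  have hbe0 : ((b : ℂ) + ε) ≠ 0 := by
    have : ((b + ε : ℝ) : ℂ) ≠ 0 := by exact_mod_cast hbe.ne'
    simpa using this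
  have heik : eik ≠ 0 := Complex.exp_ne_zero _
  have hmul : eik * emik = 1 := by
    rw [show eik * emik = Complex.exp (Complex.I * k + -(Complex.I * k)) from
      (Complex.exp_add _ _).symm]
    simp
  have hone : (1 : Matrix (Fin 2) (Fin 2) ℂ) = !![1,0;0,1] := by
    ext i j; fin_cases i <;> fin_cases j <;> simp
  have i2 : A2⁻¹ = !![-(b:ℂ)⁻¹, ((b:ℂ)+ε)*eik*((b:ℂ)⁻¹*(b:ℂ)⁻¹); 0, -(b:ℂ)⁻¹] := by
    apply Matrix.inv_eq_right_inv
    rw [hone]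
    show (!![_,_;_,_] * _ : Matrix (Fin 2) (Fin 2) ℂ) = _
    rw [Matrix.mul_fin_two]
    ext i j
    fin_cases i <;> fin_cases j <;>
      simp only [Matrix.cons_val', Matrix.cons_val_zero, Matrix.cons_val_one,
        Matrix.head_cons, Matrix.empty_val', Matrix.cons_val_fin_one, Fin.isValue, Matrix.of_apply, Fin.zero_eta, Fin.mk_one] <;>
      field_simp <;> ring
  have i4 : A4⁻¹ = !![-(b:ℂ)⁻¹, ((b:ℂ)+ε)⁻¹; 0, -((b:ℂ)+ε)⁻¹] := by
    apply Matrix.inv_eq_right_inv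
    rw [hone]
    show (!![_,_;_,_] * _ : Matrix (Fin 2) (Fin 2) ℂ) = _
    rw [Matrix.mul_fin_two]
    ext i j
    fin_cases i <;> fin_cases j <;>
      simp only [Matrix.cons_val', Matrix.cons_val_zero, Matrix.cons_val_one,
        Matrix.head_cons, Matrix.empty_val', Matrix.cons_val_fin_one, Fin.isValue, Matrix.of_apply, Fin.zero_eta, Fin.mk_one] <;>
      field_simp <;> ring
  have i6 : A6⁻¹ = !![-((b:ℂ)+ε)⁻¹, ((b:ℂ)+ε)⁻¹; 0, -(b:ℂ)⁻¹] := by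
    apply Matrix.inv_eq_right_inv
    rw [hone]
    show (!![_,_;_,_] * _ : Matrix (Fin 2) (Fin 2) ℂ) = _
    rw [Matrix.mul_fin_two]
    ext i j
    fin_cases i <;> fin_cases j <;>
      simp only [Matrix.cons_val', Matrix.cons_val_zero, Matrix.cons_val_one,
        Matrix.head_cons, Matrix.empty_val', Matrix.cons_val_fin_one, Fin.isValue, Matrix.of_apply, Fin.zero_eta, Fin.mk_one] <;>
      field_simp <;> ring
  have m1 : A2⁻¹ * A1 = !![1 - ((b:ℂ)+ε)/(b:ℂ)*eik, -(((b:ℂ)+ε)/(b:ℂ))^2*(eik*emik);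
      1, ((b:ℂ)+ε)/(b:ℂ)*emik] := by
    rw [i2]
    show (!![_,_;_,_] * !![_,_;_,_] : Matrix (Fin 2) (Fin 2) ℂ) = _
    rw [Matrix.mul_fin_two]
    ext i j
    fin_cases i <;> fin_cases j <;>
      simp only [Matrix.cons_val', Matrix.cons_val_zero, Matrix.cons_val_one,
        Matrix.head_cons, Matrix.empty_val', Matrix.cons_val_fin_one, Fin.isValue, Matrix.of_apply, Fin.zero_eta, Fin.mk_one] <;>
      field_simp <;> ring
  have m2 : A4⁻¹ * A3 = !![((b:ℂ)+ε)/(b:ℂ)*emik - (b:ℂ)/((b:ℂ)+ε), -((b:ℂ)/((b:ℂ)+ε));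
      (b:ℂ)/((b:ℂ)+ε), (b:ℂ)/((b:ℂ)+ε)] := by
    rw [i4]
    show (!![_,_;_,_] * !![_,_;_,_] : Matrix (Fin 2) (Fin 2) ℂ) = _
    rw [Matrix.mul_fin_two]
    ext i j
    fin_cases i <;> fin_cases j <;>
      simp only [Matrix.cons_val', Matrix.cons_val_zero, Matrix.cons_val_one,
        Matrix.head_cons, Matrix.empty_val', Matrix.cons_val_fin_one, Fin.isValue, Matrix.of_apply, Fin.zero_eta, Fin.mk_one] <;>
      field_simp <;> ring
  have m3 : A6⁻¹ * A5 = !![(b:ℂ)/((b:ℂ)+ε) - eik, -((b:ℂ)/((b:ℂ)+ε));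
      ((b:ℂ)+ε)/(b:ℂ)*eik, 1] := by
    rw [i6]
    show (!![_,_;_,_] * !![_,_;_,_] : Matrix (Fin 2) (Fin 2) ℂ) = _
    rw [Matrix.mul_fin_two]
    ext i j
    fin_cases i <;> fin_cases j <;>
      simp only [Matrix.cons_val', Matrix.cons_val_zero, Matrix.cons_val_one,
        Matrix.head_cons, Matrix.empty_val', Matrix.cons_val_fin_one, Fin.isValue, Matrix.of_apply, Fin.zero_eta, Fin.mk_one] <;>
      field_simp <;> ring
  show (-(A6⁻¹ * A5 * A4⁻¹ * A3 * A2⁻¹ * A1)).trace = _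
  have hre : A6⁻¹ * A5 * A4⁻¹ * A3 * A2⁻¹ * A1 = (A6⁻¹ * A5) * ((A4⁻¹ * A3) * (A2⁻¹ * A1)) := by
    noncomm_ring
  rw [hre, m1, m2, m3]
  simp only [Matrix.trace_fin_two, Matrix.neg_apply, Matrix.mul_apply, Matrix.of_apply,
    Fin.sum_univ_two, Matrix.cons_val', Matrix.cons_val_zero, Matrix.cons_val_one,
    Matrix.head_cons, Matrix.empty_val', Matrix.cons_val_fin_one, Matrix.head_fin_const]
  rw [show 2*(b:ℂ)/((b:ℂ)+ε) = 2*((b:ℂ)/((b:ℂ)+ε)) by ring,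
      show ((b:ℂ)+ε)^2/(b:ℂ)^2 = (((b:ℂ)+ε)/(b:ℂ))^2 by rw [div_pow]]
  set β := (b:ℂ)/((b:ℂ)+ε) with hβ
  set γ := ((b:ℂ)+ε)/(b:ℂ) with hγ
  have hβγ : β*γ = 1 := by rw [hβ, hγ]; field_simp
  clear_value β γ eik emik
  linear_combination (eik^2 - 2*emik - 4*γ + 3*γ*(eik*emik) - γ^2*(eik^2*emik) - 2*β*eik) * hβγ
    + (4*γ - 2*γ^2*eik + γ^4 + γ^4*(eik*emik)) * hmul
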